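/- Let X ∈ ℝ^{n×q} and Y ∈ ℝ^{n×d} be nonzero matrices with rows x_i and y_i, let γ := ‖X‖_op²/‖Y‖_op², and suppose the positive reals {p_i}_{i∈[n]} satisfy p_i ≥ (1/4)·(‖x_i‖₂² + γ‖y_i‖₂²)/(‖X‖_F² + γ‖Y‖_F²) for all i ∈ [n]. Then for every i ∈ [n], ‖x_i‖₂·‖y_i‖₂ ≤ 2·p_i·‖X‖_op·‖Y‖_op·(srank(X) + srank(Y)); equivalently, the per-sample matrix (1/p_i)·x_iᵀy_i has spectral norm at most 2‖X‖_op‖Y‖_op(srank(X) + srank(Y)). -/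

import Mathlib

/-- The spectral (operator) norm of a real matrix. -/
noncomputable def opNorm {m n : ℕ} (M : Matrix (Fin m) (Fin n) ℝ) : ℝ :=
  ‖LinearMap.toContinuousLinearMap (Matrix.toEuclideanLin M)‖

/-- The Frobenius norm of a real matrix. -/
noncomputable def frobNorm {m n : ℕ} (M : Matrix (Fin m) (Fin n) ℝ) : ℝ :=
  Real.sqrt (∑ i, ∑ j, (M i j) ^ 2)

/-- The stable rank ‖M‖_F² / ‖M‖_op². -/
noncomputable def srank {m n : ℕ} (M : Matrix (Fin m) (Fin n) ℝ) : ℝ :=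
  frobNorm M ^ 2 / opNorm M ^ 2

lemma opNorm_nonneg {m n : ℕ} (M : Matrix (Fin m) (Fin n) ℝ) : 0 ≤ opNorm M :=
  norm_nonneg _

lemma opNorm_pos {m n : ℕ} (M : Matrix (Fin m) (Fin n) ℝ) (h : M ≠ 0) :
    0 < opNorm M := by
  rw [opNorm, norm_pos_iff]
  intro hc
  apply h
  have h2 : Matrix.toEuclideanLin M = 0 := by
    have := congrArg ContinuousLinearMap.toLinearMap hc
    simpa using this
  exact (map_eq_zero_iff _ (Matrix.toEuclideanLin (𝕜 := ℝ)).injective).mp h2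

lemma frobNorm_pos {m n : ℕ} (M : Matrix (Fin m) (Fin n) ℝ) (h : M ≠ 0) :
    0 < frobNorm M := by
  rw [frobNorm]
  apply Real.sqrt_pos.mpr
  obtain ⟨i, j, hij⟩ : ∃ i j, M i j ≠ 0 := by
    by_contra hc
    push_neg at hc
    exact h (Matrix.ext fun i j => hc i j)
  calc (0:ℝ) < ∑ j', (M i j') ^ 2 := by
        apply Finset.sum_pos' (fun _ _ => sq_nonneg _)
        exact ⟨j, Finset.mem_univ _, by positivity⟩
    _ ≤ _ := Finset.single_le_sum (f := fun i => ∑ j', (M i j') ^ 2)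
        (fun _ _ => Finset.sum_nonneg fun _ _ => sq_nonneg _) (Finset.mem_univ i)

lemma opNorm_smul {m n : ℕ} (c : ℝ) (M : Matrix (Fin m) (Fin n) ℝ) :
    opNorm (c • M) = |c| * opNorm M := by
  rw [opNorm, opNorm, map_smul, map_smul]
  exact (norm_smul c (LinearMap.toContinuousLinearMap (Matrix.toEuclideanLin M))).trans
    (by rw [Real.norm_eq_abs])

lemma euclid_norm_symm {d : ℕ} (x : Fin d → ℝ) :
    ‖(WithLp.equiv 2 (Fin d → ℝ)).symm x‖ = Real.sqrt (∑ j, x j ^ 2) := by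
  rw [EuclideanSpace.norm_eq]
  congr 1
  refine Finset.sum_congr rfl fun j _ => ?_
  rw [show ((WithLp.equiv 2 (Fin d → ℝ)).symm x).ofLp j = x j from rfl, Real.norm_eq_abs, sq_abs]

lemma opNorm_vecMulVec_le {q d : ℕ} (x : Fin q → ℝ) (y : Fin d → ℝ) :
    opNorm (Matrix.vecMulVec x y) ≤
      Real.sqrt (∑ j, x j ^ 2) * Real.sqrt (∑ j, y j ^ 2) := by
  apply ContinuousLinearMap.opNorm_le_bound _ (by positivity)
  intro v
  have hv : (LinearMap.toContinuousLinearMap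
        (Matrix.toEuclideanLin (Matrix.vecMulVec x y))) v
      = (dotProduct y ((WithLp.equiv 2 (Fin d → ℝ)) v)) •
          (WithLp.equiv 2 (Fin q → ℝ)).symm x := by
    show (Matrix.toEuclideanLin (Matrix.vecMulVec x y)) v = _
    rw [Matrix.toEuclideanLin_apply]
    have : Matrix.mulVec (Matrix.vecMulVec x y) ((WithLp.equiv 2 (Fin d → ℝ)) v)
        = (dotProduct y ((WithLp.equiv 2 (Fin d → ℝ)) v)) • x := by
      ext j
      simp only [Matrix.mulVec, Matrix.vecMulVec, dotProduct, Pi.smul_apply,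
        smul_eq_mul, Matrix.of_apply, Finset.sum_mul]
      exact Finset.sum_congr rfl fun k _ => by ring
    exact congrArg (WithLp.toLp 2) this
  rw [hv, norm_smul, Real.norm_eq_abs, euclid_norm_symm]
  have hcs : |dotProduct y ((WithLp.equiv 2 (Fin d → ℝ)) v)|
      ≤ Real.sqrt (∑ j, y j ^ 2) * ‖v‖ := by
    have hinner : dotProduct y ((WithLp.equiv 2 (Fin d → ℝ)) v)
        = inner ℝ ((WithLp.equiv 2 (Fin d → ℝ)).symm y) v := by
      rw [PiLp.inner_apply]
      exact Finset.sum_congr rfl fun j _ => by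
        simp [RCLike.inner_apply, dotProduct, mul_comm]
    rw [hinner, ← euclid_norm_symm]
    exact abs_real_inner_le_norm _ _
  calc |dotProduct y ((WithLp.equiv 2 (Fin d → ℝ)) v)| * Real.sqrt (∑ j, x j ^ 2)
      ≤ (Real.sqrt (∑ j, y j ^ 2) * ‖v‖) * Real.sqrt (∑ j, x j ^ 2) :=
        mul_le_mul_of_nonneg_right hcs (Real.sqrt_nonneg _)
    _ = Real.sqrt (∑ j, x j ^ 2) * Real.sqrt (∑ j, y j ^ 2) * ‖v‖ := by ring

theorem amm_per_sample_bound {n q d : ℕ}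
    (X : Matrix (Fin n) (Fin q) ℝ) (Y : Matrix (Fin n) (Fin d) ℝ)
    (hX : X ≠ 0) (hY : Y ≠ 0)
    (p : Fin n → ℝ) (hp : ∀ i, 0 < p i)
    (hplb : ∀ i,
      (1 / 4) * (((∑ j, (X i j) ^ 2) +
          (opNorm X ^ 2 / opNorm Y ^ 2) * ∑ j, (Y i j) ^ 2) /
        (frobNorm X ^ 2 + (opNorm X ^ 2 / opNorm Y ^ 2) * frobNorm Y ^ 2)) ≤ p i) :
    ∀ i : Fin n,
      Real.sqrt (∑ j, (X i j) ^ 2) * Real.sqrt (∑ j, (Y i j) ^ 2) ≤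
        2 * p i * opNorm X * opNorm Y * (srank X + srank Y) ∧
      opNorm ((p i)⁻¹ • Matrix.vecMulVec (X i) (Y i)) ≤
        2 * opNorm X * opNorm Y * (srank X + srank Y) := by
  intro i
  set A := opNorm X with hA'
  set B := opNorm Y with hB'
  set F := frobNorm X with hF'
  set G := frobNorm Y with hG'
  have hA : 0 < A := opNorm_pos X hX
  have hB : 0 < B := opNorm_pos Y hY
  have hF : 0 < F := frobNorm_pos X hX
  have hG : 0 < G := frobNorm_pos Y hY
  set a := Real.sqrt (∑ j, (X i j) ^ 2) with ha'
  set b := Real.sqrt (∑ j, (Y i j) ^ 2) with hb'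
  have ha0 : 0 ≤ a := Real.sqrt_nonneg _
  have hb0 : 0 ≤ b := Real.sqrt_nonneg _
  have ha2 : a ^ 2 = ∑ j, (X i j) ^ 2 := Real.sq_sqrt (Finset.sum_nonneg fun _ _ => sq_nonneg _)
  have hb2 : b ^ 2 = ∑ j, (Y i j) ^ 2 := Real.sq_sqrt (Finset.sum_nonneg fun _ _ => sq_nonneg _)
  have hD : (0:ℝ) < F ^ 2 + (A ^ 2 / B ^ 2) * G ^ 2 := by positivity
  have hN : a ^ 2 + (A ^ 2 / B ^ 2) * b ^ 2
      ≤ 4 * p i * (F ^ 2 + (A ^ 2 / B ^ 2) * G ^ 2) := by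
    have h := hplb i
    rw [← ha2, ← hb2] at h
    have h2 : (a ^ 2 + (A ^ 2 / B ^ 2) * b ^ 2) /
        (F ^ 2 + (A ^ 2 / B ^ 2) * G ^ 2) ≤ 4 * p i := by linarith
    calc a ^ 2 + (A ^ 2 / B ^ 2) * b ^ 2
        = ((a ^ 2 + (A ^ 2 / B ^ 2) * b ^ 2) /
            (F ^ 2 + (A ^ 2 / B ^ 2) * G ^ 2)) * (F ^ 2 + (A ^ 2 / B ^ 2) * G ^ 2) := by
          field_simp
      _ ≤ 4 * p i * (F ^ 2 + (A ^ 2 / B ^ 2) * G ^ 2) :=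
          mul_le_mul_of_nonneg_right h2 hD.le
  have h4 : a ^ 2 * B ^ 2 + A ^ 2 * b ^ 2
      ≤ 4 * p i * (F ^ 2 * B ^ 2 + A ^ 2 * G ^ 2) := by
    have := mul_le_mul_of_nonneg_right hN (sq_nonneg B)
    have e1 : (a ^ 2 + (A ^ 2 / B ^ 2) * b ^ 2) * B ^ 2
        = a ^ 2 * B ^ 2 + A ^ 2 * b ^ 2 := by field_simp
    have e2 : 4 * p i * (F ^ 2 + (A ^ 2 / B ^ 2) * G ^ 2) * B ^ 2
        = 4 * p i * (F ^ 2 * B ^ 2 + A ^ 2 * G ^ 2) := by field_simp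
    linarith [e1 ▸ e2 ▸ this]
  have hsr : srank X + srank Y = F ^ 2 / A ^ 2 + G ^ 2 / B ^ 2 := rfl
  have part1 : a * b ≤ 2 * p i * A * B * (srank X + srank Y) := by
    rw [hsr]
    have e3 : 2 * p i * A * B * (F ^ 2 / A ^ 2 + G ^ 2 / B ^ 2)
        = 2 * p i * (F ^ 2 * B ^ 2 + A ^ 2 * G ^ 2) / (A * B) := by
      field_simp
    rw [e3, le_div_iff₀ (mul_pos hA hB)]
    nlinarith [sq_nonneg (a * B - A * b), hp i]
  refine ⟨part1, ?_⟩
  have hpinv : |(p i)⁻¹| = (p i)⁻¹ := abs_of_pos (inv_pos.mpr (hp i))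
  calc opNorm ((p i)⁻¹ • Matrix.vecMulVec (X i) (Y i))
      = (p i)⁻¹ * opNorm (Matrix.vecMulVec (X i) (Y i)) := by
        rw [opNorm_smul, hpinv]
    _ ≤ (p i)⁻¹ * (a * b) :=
        mul_le_mul_of_nonneg_left (opNorm_vecMulVec_le (X i) (Y i)) (inv_nonneg.mpr (hp i).le)
    _ ≤ (p i)⁻¹ * (2 * p i * A * B * (srank X + srank Y)) :=
        mul_le_mul_of_nonneg_left part1 (inv_nonneg.mpr (hp i).le)
    _ = 2 * A * B * (srank X + srank Y) := by
        field_simp [(hp i).ne']
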